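/- There exists t₀ > 0 such that for all t ≥ t₀: Σ_{g=1}^{G} η'_g·ε̂_g(t)/Λ'_g(t) > 1 − Σ_{g=1}^{G} f_g(t)/Λ'_g(t). In other words, with σ = 1 and ζ = 1, the error-contraction criterion of the two-step iteration fails for all sufficiently large timesteps. -/

import Mathlib

lemma fLB (m M t : ℝ) (hm : 0 < m) (hM : 0 < M) (ht : 0 < t)
    (hMt : 1 ≤ M * t) : m / (2 * M) ≤ m * t / (1 + M * t) := by
  rw [div_le_div_iff₀ (by positivity) (by positivity)]
  nlinarith

lemma alg (η β s δ F A D Λ : ℝ) (hη : 0 < η) (hβ : 0 < β) (hβle : β ≤ 1 / 2)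
    (hs : 0 < s) (hsβ2 : s ≤ β / 2) (hsη : s ≤ β * η / 4)
    (hδ : 0 < δ) (hδeq : δ * (η + 2) = β * η / 4)
    (hFβ : β ≤ F) (hF1 : F < 1) (hA : 0 < A) (hAs : A ≤ s)
    (hD : D = 1 - F + A) (hΛ : Λ = η + 1 + A) :
    (1 + δ) * F ≤ (η * (F / D) + F) / Λ := by
  have hF : 0 < F := lt_of_lt_of_le hβ hFβ
  have hDpos : 0 < D := by rw [hD]; linarith
  have hΛpos : 0 < Λ := by rw [hΛ]; linarith
  have hDle : D ≤ 1 - β + s := by rw [hD]; linarith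
  have hΛle : Λ ≤ η + 2 := by rw [hΛ]; linarith
  have key : D * ((1 + δ) * Λ - 1) ≤ η := by
    have h1 : (1 + δ) * Λ - 1 = η + A + δ * Λ := by rw [hΛ]; ring
    have hδΛ : δ * Λ ≤ δ * (η + 2) := mul_le_mul_of_nonneg_left hΛle hδ.le
    have h2 : (1 + δ) * Λ - 1 ≤ η + s + β * η / 4 := by
      rw [h1]; linarith
    have hXpos : 0 ≤ (1 + δ) * Λ - 1 := by rw [h1]; positivity
    have h3 : η + s + β * η / 4 ≤ η * (1 + β / 2) := by nlinarith
    have h4 : D * ((1 + δ) * Λ - 1) ≤ (1 - β + s) * (η * (1 + β / 2)) :=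
      mul_le_mul hDle (le_trans h2 h3) hXpos (by linarith)
    have h6 : (1 - β + s) * (η * (1 + β / 2)) ≤ (1 - β / 2) * (η * (1 + β / 2)) := by
      have hh : 1 - β + s ≤ 1 - β / 2 := by linarith
      have hpos : 0 ≤ η * (1 + β / 2) := by positivity
      exact mul_le_mul_of_nonneg_right hh hpos
    have h7 : (1 - β / 2) * (η * (1 + β / 2)) ≤ η := by nlinarith [sq_nonneg β]
    linarith
  rw [le_div_iff₀ hΛpos]
  have heq : η * (F / D) = η * F / D := by ring
  rw [heq]
  have main0 := mul_le_mul_of_nonneg_left key hF.le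
  have main : ((1 + δ) * F * Λ - F) * D ≤ η * F := by nlinarith [main0]
  have h8 : (1 + δ) * F * Λ - F ≤ η * F / D := (le_div_iff₀ hDpos).mpr main
  linarith

lemma auxkey (η m M k t : ℝ) (hη : 0 < η) (hm : 0 < m) (hmM : m ≤ M) (hk : 0 < k)
    (ht : 0 < t) (hMt : 1 ≤ M * t)
    (hkt : 1 ≤ k * t * min (m / (2 * M) / 2) (m / (2 * M) * η / 4)) :
    (1 + m / (2 * M) * η / (4 * (η + 2))) * (m * t / (1 + M * t)) ≤
      (η * ((m * t / (1 + M * t)) / (1 - m * t / (1 + M * t) + 1 / (k * t)))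
        + m * t / (1 + M * t)) / (η + 1 + 1 / (k * t)) := by
  have hM : 0 < M := lt_of_lt_of_le hm hmM
  have hβ : 0 < m / (2 * M) := by positivity
  have hβle : m / (2 * M) ≤ 1 / 2 := by
    rw [div_le_div_iff₀ (by positivity) (by norm_num)]; linarith
  have hs : 0 < min (m / (2 * M) / 2) (m / (2 * M) * η / 4) :=
    lt_min (by positivity) (by positivity)
  have h1Mt : (0:ℝ) < 1 + M * t := by positivity
  refine alg η (m / (2 * M)) (min (m / (2 * M) / 2) (m / (2 * M) * η / 4))
    (m / (2 * M) * η / (4 * (η + 2))) (m * t / (1 + M * t)) (1 / (k * t)) _ _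
    hη hβ hβle hs (min_le_left _ _) (min_le_right _ _) (by positivity)
    (by field_simp) (fLB m M t hm hM ht hMt) ?_ (by positivity) ?_ rfl rfl
  · rw [div_lt_one h1Mt]; nlinarith
  · rw [div_le_iff₀ (by positivity)]; linarith [hkt]

/-- Lemma 3 (L5) of the paper: with `σ = 1` and `ζ = 1`, the error-contraction
criterion of the two-step iteration fails for all sufficiently large
timesteps `t`. -/
theorem stmt_12
    (G : ℕ) (hG : 1 ≤ G)
    (k m η' : Fin G → ℝ)
    (hk : ∀ g, 0 < k g) (hm : ∀ g, 0 < m g) (hη' : ∀ g, 0 < η' g)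
    (a C' f Λ' ε : Fin G → ℝ → ℝ)
    (ha : ∀ g, ∀ t : ℝ, a g t = k g * t)
    (hC' : ∀ g, ∀ t : ℝ, C' g t = t * ∑ ℓ, m ℓ)
    (hf : ∀ g, ∀ t : ℝ, f g t = m g * t / (1 + C' g t))
    (hΛ' : ∀ g, ∀ t : ℝ, Λ' g t = η' g + 1 + 1 / a g t)
    (hε : ∀ g, ∀ t : ℝ, ε g t = f g t / (1 - f g t + 1 / a g t)) :
    ∃ t₀ : ℝ, 0 < t₀ ∧ ∀ t : ℝ, t₀ ≤ t →
      1 - ∑ g, f g t / Λ' g t < ∑ g, η' g * ε g t / Λ' g t := by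
  have g0 : Fin G := ⟨0, hG⟩
  set M : ℝ := ∑ ℓ, m ℓ with hMdef
  have hne : (Finset.univ : Finset (Fin G)).Nonempty := ⟨g0, Finset.mem_univ g0⟩
  have hM : 0 < M := Finset.sum_pos (fun i _ => hm i) hne
  have hmM : ∀ g : Fin G, m g ≤ M := fun g =>
    Finset.single_le_sum (f := m) (fun i _ => (hm i).le) (Finset.mem_univ g)
  have hβpos : ∀ g : Fin G, 0 < m g / (2 * M) := fun g => div_pos (hm g) (by linarith)
  set S : Fin G → ℝ := fun g => min (m g / (2 * M) / 2) (m g / (2 * M) * η' g / 4)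
    with hSdef
  have hS : ∀ g, 0 < S g := fun g => lt_min (half_pos (hβpos g))
    (div_pos (mul_pos (hβpos g) (hη' g)) (by norm_num))
  set δ : Fin G → ℝ := fun g => m g / (2 * M) * η' g / (4 * (η' g + 2)) with hδdef
  have hδ : ∀ g, 0 < δ g := fun g =>
    show (0:ℝ) < m g / (2 * M) * η' g / (4 * (η' g + 2)) from
      div_pos (mul_pos (hβpos g) (hη' g)) (by nlinarith [hη' g])
  refine ⟨max (max 1 (1 / M))
      (max (Finset.univ.sup' hne (fun g => 1 / (k g * S g)))
        (1 / (δ g0 * (m g0 / (2 * M)) * M))), ?_, fun t ht => ?_⟩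
  · exact lt_of_lt_of_le one_pos ((le_max_left _ _).trans (le_max_left _ _))
  · have ht1 : 1 ≤ t := le_trans ((le_max_left _ _).trans (le_max_left _ _)) ht
    have htpos : 0 < t := lt_of_lt_of_le one_pos ht1
    have hMt : 1 ≤ M * t := by
      have h1 : 1 / M ≤ t := le_trans ((le_max_right _ _).trans (le_max_left _ _)) ht
      rw [div_le_iff₀ hM] at h1; linarith [h1]
    have hkts : ∀ g : Fin G, 1 ≤ k g * t * S g := by
      intro g
      have h1 : 1 / (k g * S g) ≤ t :=
        le_trans ((Finset.le_sup' (fun g => 1 / (k g * S g))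
          (Finset.mem_univ g)).trans
          ((le_max_left _ _).trans (le_max_right _ _))) ht
      rw [div_le_iff₀ (mul_pos (hk g) (hS g))] at h1
      nlinarith [h1]
    have htδ : 1 ≤ δ g0 * (m g0 / (2 * M)) * M * t := by
      have h1 : 1 / (δ g0 * (m g0 / (2 * M)) * M) ≤ t :=
        le_trans ((le_max_right _ _).trans (le_max_right _ _)) ht
      rw [div_le_iff₀ (mul_pos (mul_pos (hδ g0) (hβpos g0)) hM)] at h1
      nlinarith [h1]
    have h1Mt : (0:ℝ) < 1 + M * t := by positivity
    -- per-group bound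
    have hterm : ∀ g : Fin G,
        (1 + δ g) * (m g * t / (1 + M * t)) ≤
          η' g * ε g t / Λ' g t + f g t / Λ' g t := by
      intro g
      rw [← add_div, hε g t, hΛ' g t, hf g t, ha g t, hC' g t,
        mul_comm t M]
      exact auxkey (η' g) (m g) M (k g) t (hη' g) (hm g) (hmM g) (hk g) htpos hMt
        (hkts g)
    have hsum : ∑ g, (1 + δ g) * (m g * t / (1 + M * t)) ≤
        ∑ g, (η' g * ε g t / Λ' g t + f g t / Λ' g t) :=
      Finset.sum_le_sum fun g _ => hterm g
    have hsplit : ∑ g, (1 + δ g) * (m g * t / (1 + M * t)) =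
        (∑ g, m g * t / (1 + M * t)) + ∑ g, δ g * (m g * t / (1 + M * t)) := by
      rw [← Finset.sum_add_distrib]; congr 1; ext g; ring
    have hsumF : ∑ g, m g * t / (1 + M * t) = M * t / (1 + M * t) := by
      rw [← Finset.sum_div, ← Finset.sum_mul]
    have hsingle : δ g0 * (m g0 * t / (1 + M * t)) ≤
        ∑ g, δ g * (m g * t / (1 + M * t)) :=
      Finset.single_le_sum (f := fun g => δ g * (m g * t / (1 + M * t)))
        (fun i _ => (mul_pos (hδ i) (div_pos (mul_pos (hm i) htpos) h1Mt)).le)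
        (Finset.mem_univ g0)
    have hF0 : m g0 / (2 * M) ≤ m g0 * t / (1 + M * t) :=
      fLB (m g0) M t (hm g0) hM htpos hMt
    have hlow : 1 / (1 + M * t) < δ g0 * (m g0 / (2 * M)) := by
      rw [div_lt_iff₀ h1Mt]
      nlinarith [htδ, mul_pos (hδ g0) (hβpos g0)]
    have hMtfrac : M * t / (1 + M * t) = 1 - 1 / (1 + M * t) := by
      field_simp; ring
    have hgt1 : 1 < ∑ g, (η' g * ε g t / Λ' g t + f g t / Λ' g t) := by
      have h2 : δ g0 * (m g0 / (2 * M)) ≤ δ g0 * (m g0 * t / (1 + M * t)) :=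
        mul_le_mul_of_nonneg_left hF0 (hδ g0).le
      calc 1 < M * t / (1 + M * t) + δ g0 * (m g0 / (2 * M)) := by
              rw [hMtfrac]; linarith [hlow]
        _ ≤ (∑ g, m g * t / (1 + M * t)) + ∑ g, δ g * (m g * t / (1 + M * t)) := by
              rw [hsumF]; linarith [h2, hsingle]
        _ = ∑ g, (1 + δ g) * (m g * t / (1 + M * t)) := hsplit.symm
        _ ≤ _ := hsum
    rw [Finset.sum_add_distrib] at hgt1
    linarith
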